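/- Let H be a Hilbert space of functions on Ω with nonsingular reproducing kernel k, and suppose L is a bounded operator on H, A is a positive operator on H of rank at most m, and φ : D_φ → ℂ (D_φ ⊆ Ω) satisfies L* k_λ = (1 − A)(conj(φ(λ)) k_λ) for all λ ∈ D_φ. Then for any ξ ∈ ℂ with |ξ| > ‖L‖, the equation φ(λ) = ξ has at most m solutions λ ∈ D_φ. -/

import Mathlib

open scoped ComplexConjugate

/-- (Theorem `mplcty`.) Suppose `H` is a Hilbert function space on `Ω`
with nonsingular kernel (`kf` linearly independent), `L` bounded, `A` positive of rank
at most `m`, and `L* k_λ = (1 − A)(conj(φ(λ)) k_λ)` for all `λ` in the domain `D` of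
`φ`. Then for `|ξ| > ‖L‖` the equation `φ(λ) = ξ` has at most `m` solutions in `D`. -/
theorem stmt11 {H Ω : Type*} [NormedAddCommGroup H] [InnerProductSpace ℂ H]
    [CompleteSpace H]
    (ev : H →ₗ[ℂ] (Ω → ℂ)) (hinj : Function.Injective ev)
    (kf : Ω → H)
    (hrep : ∀ (f : H) (l : Ω), (inner ℂ (kf l) f : ℂ) = ev f l)
    (hns : LinearIndependent ℂ kf)
    (L A : H →L[ℂ] H) (m : ℕ)
    (hA : A.IsPositive) (hrank : LinearMap.rank (A : H →ₗ[ℂ] H) ≤ m)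
    (D : Set Ω) (φ : Ω → ℂ)
    (hL : ∀ l ∈ D, ContinuousLinearMap.adjoint L (kf l)
      = conj (φ l) • kf l - A (conj (φ l) • kf l)) :
    ∀ ξ : ℂ, ‖L‖ < ‖ξ‖ →
      ∀ s : Finset Ω, (↑s ⊆ {l ∈ D | φ l = ξ}) → s.card ≤ m := by
  intro ξ hξ s hs
  by_contra hlt
  push_neg at hlt
  -- family of A(kf λ) for λ ∈ s in range A is dependent
  set R := LinearMap.range (A : H →ₗ[ℂ] H)
  have hmem : ∀ l : s, A (kf l) ∈ R := fun l => ⟨kf l, rfl⟩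
  have hdep : ¬ LinearIndependent ℂ (fun l : s => (⟨A (kf l), hmem l⟩ : R)) := by
    intro hind
    have := hind.cardinal_lift_le_rank
    rw [Cardinal.mk_coe_finset] at this
    have : (s.card : Cardinal) ≤ LinearMap.rank (A : H →ₗ[ℂ] H) := by
      simpa [LinearMap.rank] using this
    have : (s.card : Cardinal) ≤ (m : Cardinal) := this.trans hrank
    exact absurd (Nat.cast_le.mp this) (not_le.mpr hlt)
  rw [Fintype.not_linearIndependent_iff] at hdep
  obtain ⟨g, hg0, i0, hi0⟩ := hdep
  have hAsum : ∑ l : s, g l • A (kf l) = 0 := by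
    have := congrArg (Subtype.val) hg0
    simpa using this
  set h : H := ∑ l : s, g l • kf (l : Ω) with hh
  have hne : h ≠ 0 := by
    intro h0
    have hind : LinearIndependent ℂ (fun l : s => kf (l : Ω)) :=
      hns.comp _ Subtype.val_injective
    exact hi0 (Fintype.linearIndependent_iff.mp hind g h0 i0)
  have hsD : ∀ l : s, (l : Ω) ∈ D ∧ φ l = ξ := fun l => hs l.2
  have hLh : ContinuousLinearMap.adjoint L h = conj ξ • h := by
    have : ContinuousLinearMap.adjoint L h
        = ∑ l : s, g l • (conj ξ • kf (l : Ω) - A (conj ξ • kf (l : Ω))) := by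
      rw [hh, map_sum]
      refine Finset.sum_congr rfl fun l _ => ?_
      rw [map_smul, hL l (hsD l).1, (hsD l).2]
    rw [this]
    have : ∑ l : s, g l • (conj ξ • kf (l : Ω) - A (conj ξ • kf (l : Ω)))
        = conj ξ • h - conj ξ • ∑ l : s, g l • A (kf (l : Ω)) := by
      rw [hh, Finset.smul_sum, Finset.smul_sum, ← Finset.sum_sub_distrib]
      refine Finset.sum_congr rfl fun l _ => ?_
      rw [map_smul, smul_sub]
      module
    rw [this, hAsum, smul_zero, sub_zero]
  have hnorm : ‖ξ‖ * ‖h‖ ≤ ‖L‖ * ‖h‖ := by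
    calc ‖ξ‖ * ‖h‖ = ‖conj ξ • h‖ := by
          rw [norm_smul, RCLike.norm_conj]
      _ = ‖ContinuousLinearMap.adjoint L h‖ := by rw [hLh]
      _ ≤ ‖ContinuousLinearMap.adjoint L‖ * ‖h‖ := (ContinuousLinearMap.adjoint L).le_opNorm h
      _ = ‖L‖ * ‖h‖ := by rw [ContinuousLinearMap.adjoint.norm_map L]
  have hpos : 0 < ‖h‖ := norm_pos_iff.mpr hne
  nlinarith
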